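/- Let 0 ≤ i ≤ n and let U be an i × n matrix over ℤ whose rows form a ℤ-basis of a direct summand of ℤ^n of rank i. Let U' be the n × n matrix over ℤ[s₁,…,s_n] obtained by appending to U the rows (s₁^j,…,s_n^j) for j = 1,…,n−i. Then det U' is a homogeneous polynomial of degree 1 + 2 + ⋯ + (n−i) that is not divisible by any integer greater than 1; in particular det U' ≠ 0. -/

import Mathlib

open MvPolynomial Finset Matrix

namespace Stmt14

variable {n i : ℕ}

noncomputable section

/-- entries of `U` extended by zero rows. -/
def u (U : Matrix (Fin i) (Fin n) ℤ) : Fin n → Fin n → ℤ :=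
  fun a b => if h : a.1 < i then U ⟨a.1, h⟩ b else 0

/-- the matrix with top rows those of `U` and bottom rows unit vectors given by `r`. -/
def Emat (U : Matrix (Fin i) (Fin n) ℤ) (r : Fin n → Fin n) : Matrix (Fin n) (Fin n) ℤ :=
  Matrix.of fun a b => if a.1 < i then u U a b else if b = r a then 1 else 0

/-- the target monomial associated to `r`. -/
def dmon (i : ℕ) (r : Fin n → Fin n) : Fin n →₀ ℕ :=
  ∑ j ∈ univ.filter (fun j : Fin n => ¬ j.1 < i), Finsupp.single (r j) (j.1 - i + 1)

lemma prod_monomial_one {ι : Type*} (t : Finset ι) (D : ι → (Fin n →₀ ℕ)) :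
    (∏ a ∈ t, (MvPolynomial.monomial (D a) (1 : ℤ))) = MvPolynomial.monomial (∑ a ∈ t, D a) 1 := by
  induction t using Finset.cons_induction with
  | empty => simp
  | cons a t ha ih =>
      rw [Finset.prod_cons, Finset.sum_cons, ih, MvPolynomial.monomial_mul, one_mul]

lemma term_eq (U : Matrix (Fin i) (Fin n) ℤ)
    (U' : Matrix (Fin n) (Fin n) (MvPolynomial (Fin n) ℤ))
    (hU' : ∀ (a : Fin n) (b : Fin n),
      U' a b = if h : (a : ℕ) < i then MvPolynomial.C (U ⟨(a : ℕ), h⟩ b)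
        else MvPolynomial.X b ^ ((a : ℕ) - i + 1))
    (σ : Equiv.Perm (Fin n)) :
    (∏ a, U' (σ a) a) =
      MvPolynomial.monomial
        (∑ a ∈ univ.filter (fun a : Fin n => ¬ (σ a).1 < i),
          Finsupp.single a ((σ a).1 - i + 1))
        (∏ a ∈ univ.filter (fun a : Fin n => (σ a).1 < i), u U (σ a) a) := by
  rw [← Finset.prod_filter_mul_prod_filter_not univ (fun a => (σ a).1 < i)]
  have h1 : (∏ a ∈ univ.filter (fun a : Fin n => (σ a).1 < i), U' (σ a) a)
      = MvPolynomial.C (∏ a ∈ univ.filter (fun a : Fin n => (σ a).1 < i), u U (σ a) a) := by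
    rw [map_prod]
    refine Finset.prod_congr rfl fun a ha => ?_
    rw [Finset.mem_filter] at ha
    rw [hU', dif_pos ha.2, u, dif_pos ha.2]
  have h2 : (∏ a ∈ univ.filter (fun a : Fin n => ¬ (σ a).1 < i), U' (σ a) a)
      = MvPolynomial.monomial
        (∑ a ∈ univ.filter (fun a : Fin n => ¬ (σ a).1 < i),
          Finsupp.single a ((σ a).1 - i + 1)) 1 := by
    rw [← prod_monomial_one]
    refine Finset.prod_congr rfl fun a ha => ?_
    rw [Finset.mem_filter] at ha
    rw [hU', dif_neg ha.2, MvPolynomial.X_pow_eq_monomial]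
  rw [h1, h2, MvPolynomial.C_mul_monomial, mul_one]

lemma degree_single (a : Fin n) (k : ℕ) : (Finsupp.single a k).degree = k := by
  rcases eq_or_ne k 0 with h | h
  · simp [h]
  · rw [Finsupp.degree_apply, Finsupp.support_single_ne_zero _ h]
    simp

lemma sum_perm {M : Type*} [AddCommMonoid M] (σ : Equiv.Perm (Fin n)) (F : Fin n → M) :
    ∑ a ∈ univ.filter (fun a : Fin n => ¬ (σ a).1 < i), F (σ a)
      = ∑ j ∈ univ.filter (fun j : Fin n => ¬ j.1 < i), F j := by
  rw [Finset.sum_filter, Finset.sum_filter]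
  exact Equiv.sum_comp σ (fun j => if ¬ j.1 < i then F j else 0)

lemma sum_e (hi : i ≤ n) :
    ∑ j ∈ univ.filter (fun j : Fin n => ¬ j.1 < i), (j.1 - i + 1)
      = ∑ k ∈ Finset.Icc 1 (n - i), k := by
  refine Finset.sum_bij (fun j _ => j.1 - i + 1) ?_ ?_ ?_ ?_
  · intro a ha
    rw [Finset.mem_filter] at ha
    have := a.2
    simp only [Finset.mem_Icc]
    omega
  · intro a ha b hb hab
    rw [Finset.mem_filter] at ha hb
    exact Fin.ext (by omega)
  · intro k hk
    rw [Finset.mem_Icc] at hk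
    have hn : i + k - 1 < n := by omega
    refine ⟨⟨i + k - 1, hn⟩, ?_, ?_⟩
    · simp only [Finset.mem_filter, Finset.mem_univ, true_and]
      omega
    · simp only
      omega
  · intro a ha
    rfl

lemma dmon_eq_iff (σ : Equiv.Perm (Fin n)) (r : Fin n → Fin n)
    (hinj : Set.InjOn r {j : Fin n | ¬ j.1 < i}) :
    (∑ a ∈ univ.filter (fun a : Fin n => ¬ (σ a).1 < i),
        Finsupp.single a ((σ a).1 - i + 1)) = dmon i r
      ↔ ∀ a : Fin n, ¬ (σ a).1 < i → a = r (σ a) := by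
  constructor
  · intro H a hia
    have hDa : (∑ x ∈ univ.filter (fun x : Fin n => ¬ (σ x).1 < i),
        Finsupp.single x ((σ x).1 - i + 1)) a = (σ a).1 - i + 1 := by
      rw [Finsupp.finset_sum_apply]
      have hterm : ∀ x ∈ univ.filter (fun x : Fin n => ¬ (σ x).1 < i),
          (Finsupp.single x ((σ x).1 - i + 1)) a
            = if x = a then (σ x).1 - i + 1 else 0 := fun x _ => Finsupp.single_apply
      rw [Finset.sum_congr rfl hterm, Finset.sum_ite_eq' _ a,
        if_pos (by simp only [Finset.mem_filter, Finset.mem_univ, true_and]; exact hia)]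
    rw [H] at hDa
    rw [dmon, Finsupp.finset_sum_apply] at hDa
    have hterm : ∀ j ∈ univ.filter (fun j : Fin n => ¬ j.1 < i),
        (Finsupp.single (r j) (j.1 - i + 1)) a
          = if r j = a then j.1 - i + 1 else 0 := fun j _ => Finsupp.single_apply
    rw [Finset.sum_congr rfl hterm] at hDa
    have hex : ∃ j ∈ univ.filter (fun j : Fin n => ¬ j.1 < i), r j = a := by
      by_contra hc
      push_neg at hc
      rw [Finset.sum_eq_zero (fun j hj => if_neg (fun hrj => (hc j (by
        rw [Finset.mem_filter] at hj ⊢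
        exact ⟨hj.1, Nat.le_of_not_lt hj.2⟩)) hrj))] at hDa
      omega
    obtain ⟨j0, hj0, hj0a⟩ := hex
    have hsum : (∑ j ∈ univ.filter (fun j : Fin n => ¬ j.1 < i),
        if r j = a then j.1 - i + 1 else 0) = j0.1 - i + 1 := by
      rw [Finset.sum_eq_single_of_mem j0 hj0]
      · rw [if_pos hj0a]
      · intro j' hj' hne
        rw [if_neg]
        intro hrj'
        rw [Finset.mem_filter] at hj' hj0
        exact hne (hinj hj'.2 hj0.2 (hrj'.trans hj0a.symm))
    rw [hsum] at hDa
    rw [Finset.mem_filter] at hj0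
    have hj0eq : j0 = σ a := Fin.ext (by omega)
    exact (hj0eq ▸ hj0a).symm
  · intro H
    rw [dmon]
    rw [← sum_perm σ (fun j => Finsupp.single (r j) (j.1 - i + 1))]
    refine Finset.sum_congr rfl fun a ha => ?_
    rw [Finset.mem_filter] at ha
    rw [← H a ha.2]

lemma coeff_det (U : Matrix (Fin i) (Fin n) ℤ)
    (U' : Matrix (Fin n) (Fin n) (MvPolynomial (Fin n) ℤ))
    (hU' : ∀ (a : Fin n) (b : Fin n),
      U' a b = if h : (a : ℕ) < i then MvPolynomial.C (U ⟨(a : ℕ), h⟩ b)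
        else MvPolynomial.X b ^ ((a : ℕ) - i + 1))
    (r : Fin n → Fin n) (hinj : Set.InjOn r {j : Fin n | ¬ j.1 < i}) :
    MvPolynomial.coeff (dmon i r) U'.det = (Emat U r).det := by
  rw [Matrix.det_apply, Matrix.det_apply, MvPolynomial.coeff_sum]
  refine Finset.sum_congr rfl fun σ _ => ?_
  rw [MvPolynomial.coeff_smul, term_eq U U' hU' σ, MvPolynomial.coeff_monomial]
  congr 1
  have hsplit : (∏ a, Emat U r (σ a) a)
      = (∏ a ∈ univ.filter (fun a : Fin n => (σ a).1 < i), Emat U r (σ a) a)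
        * ∏ a ∈ univ.filter (fun a : Fin n => ¬ (σ a).1 < i), Emat U r (σ a) a :=
    (Finset.prod_filter_mul_prod_filter_not univ _ _).symm
  have h1 : (∏ a ∈ univ.filter (fun a : Fin n => (σ a).1 < i), Emat U r (σ a) a)
      = ∏ a ∈ univ.filter (fun a : Fin n => (σ a).1 < i), u U (σ a) a := by
    refine Finset.prod_congr rfl fun a ha => ?_
    rw [Finset.mem_filter] at ha
    simp only [Emat, Matrix.of_apply, if_pos ha.2]
  have h2 : (∏ a ∈ univ.filter (fun a : Fin n => ¬ (σ a).1 < i), Emat U r (σ a) a)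
      = if (∀ a ∈ univ.filter (fun a : Fin n => ¬ (σ a).1 < i), a = r (σ a)) then 1 else 0 := by
    have hterm : ∀ a ∈ univ.filter (fun a : Fin n => ¬ (σ a).1 < i),
        Emat U r (σ a) a = if a = r (σ a) then (1:ℤ) else 0 := by
      intro a ha
      rw [Finset.mem_filter] at ha
      simp only [Emat, Matrix.of_apply, if_neg ha.2]
    rw [Finset.prod_congr rfl hterm, Finset.prod_ite_zero]
    split_ifs with h
    · exact Finset.prod_const_one
    · rfl
  rw [hsplit, h1, h2]
  by_cases hcond : ∀ a : Fin n, ¬ (σ a).1 < i → a = r (σ a)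
  · rw [if_pos ((dmon_eq_iff σ r hinj).2 hcond), if_pos (by
      intro a ha
      rw [Finset.mem_filter] at ha
      exact hcond a ha.2), mul_one]
  · rw [if_neg (fun h => hcond ((dmon_eq_iff σ r hinj).1 h)), if_neg (by
      intro h
      exact hcond fun a ha => h a (Finset.mem_filter.2 ⟨Finset.mem_univ a, ha⟩)), mul_zero]

lemma homog (hi : i ≤ n) (U : Matrix (Fin i) (Fin n) ℤ)
    (U' : Matrix (Fin n) (Fin n) (MvPolynomial (Fin n) ℤ))
    (hU' : ∀ (a : Fin n) (b : Fin n),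
      U' a b = if h : (a : ℕ) < i then MvPolynomial.C (U ⟨(a : ℕ), h⟩ b)
        else MvPolynomial.X b ^ ((a : ℕ) - i + 1)) :
    (U'.det).IsHomogeneous (∑ j ∈ Finset.Icc 1 (n - i), j) := by
  rw [← MvPolynomial.mem_homogeneousSubmodule, Matrix.det_apply]
  refine Submodule.sum_mem _ fun σ _ => ?_
  rw [Units.smul_def]
  refine Submodule.smul_mem _ _ ?_
  rw [MvPolynomial.mem_homogeneousSubmodule, term_eq U U' hU' σ]
  refine MvPolynomial.isHomogeneous_monomial _ ?_
  have hdeg : (∑ a ∈ univ.filter (fun a : Fin n => ¬ (σ a).1 < i),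
      Finsupp.single a ((σ a).1 - i + 1)).degree
      = ∑ a ∈ univ.filter (fun a : Fin n => ¬ (σ a).1 < i), ((σ a).1 - i + 1) := by
    rw [Finsupp.degree_eq_weight_one, map_sum]
    refine Finset.sum_congr rfl fun a _ => ?_
    rw [← Finsupp.degree_eq_weight_one, degree_single]
  rw [hdeg, sum_perm σ (fun j => j.1 - i + 1), sum_e hi]

/-- extension of `U` to a unimodular matrix. -/
lemma exists_unimodular (hi : i ≤ n) (U : Matrix (Fin i) (Fin n) ℤ)
    (hli : LinearIndependent ℤ (fun a : Fin i => U a))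
    (hsummand : ∃ C : Submodule ℤ (Fin n → ℤ),
      IsCompl (Submodule.span ℤ (Set.range fun a : Fin i => U a)) C) :
    ∃ A : Matrix (Fin n) (Fin n) ℤ, IsUnit A.det ∧
      ∀ (a : Fin n) (h : a.1 < i), A a = U ⟨a.1, h⟩ := by
  obtain ⟨C, hC⟩ := hsummand
  let bS : Module.Basis (Fin i) ℤ (Submodule.span ℤ (Set.range fun a : Fin i => U a)) := Module.Basis.span hli
  obtain ⟨k, bC⟩ := Submodule.basisOfPid (Pi.basisFun ℤ (Fin n)) C
  let e := Submodule.prodEquivOfIsCompl _ _ hC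
  let b0 : Module.Basis (Fin i ⊕ Fin k) ℤ (Fin n → ℤ) := (bS.prod bC).map e
  have hcard : i + k = n := by
    have h1 := Module.finrank_eq_card_basis b0
    simp [Module.finrank_pi, Fintype.card_sum] at h1
    omega
  let b : Module.Basis (Fin n) ℤ (Fin n → ℤ) := b0.reindex (finSumFinEquiv.trans (finCongr hcard))
  refine ⟨Matrix.of fun a => b a, ?_, ?_⟩
  · have key : (Matrix.of fun a => (b a : Fin n → ℤ)) = ((Pi.basisFun ℤ (Fin n)).toMatrix ⇑b)ᵀ := by
      apply Matrix.ext
      intro a c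
      rw [Matrix.transpose_apply, Module.Basis.toMatrix_apply, Pi.basisFun_repr, Matrix.of_apply]
    rw [key, Matrix.det_transpose]
    exact Matrix.isUnit_det_of_left_inverse
      (Module.Basis.toMatrix_mul_toMatrix_flip b (Pi.basisFun ℤ (Fin n)))
  · intro a h
    have happ : (finSumFinEquiv.trans (finCongr hcard)) (Sum.inl ⟨a.1, h⟩) = a := by
      apply Fin.ext
      simp [finSumFinEquiv_apply_left]
    have h1 : (finSumFinEquiv.trans (finCongr hcard)).symm a = Sum.inl ⟨a.1, h⟩ := by
      exact (Equiv.symm_apply_eq _).mpr happ.symm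
    show b a = _
    rw [show b a = b0 (Sum.inl ⟨a.1, h⟩) by rw [Module.Basis.reindex_apply, h1]]
    rw [show b0 (Sum.inl ⟨a.1, h⟩) = e ((bS.prod bC) (Sum.inl ⟨a.1, h⟩)) from Module.Basis.map_apply _ _ _]
    have h4 : (bS.prod bC) (Sum.inl ⟨a.1, h⟩) = (bS ⟨a.1, h⟩, 0) := by
      apply Prod.ext
      · simp
      · simp
    rw [h4]
    have h5 : e (bS ⟨a.1, h⟩, 0) = (bS ⟨a.1, h⟩ : Fin n → ℤ) + ((0 : C) : Fin n → ℤ) :=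
      Submodule.coe_prodEquivOfIsCompl' _ _ hC _
    rw [h5]
    simp only [Submodule.coe_zero, add_zero]
    exact congrArg Subtype.val (Module.Basis.span_apply hli ⟨a.1, h⟩)

lemma dvd_det_unimodular (U : Matrix (Fin i) (Fin n) ℤ)
    (U' : Matrix (Fin n) (Fin n) (MvPolynomial (Fin n) ℤ))
    (hU' : ∀ (a : Fin n) (b : Fin n),
      U' a b = if h : (a : ℕ) < i then MvPolynomial.C (U ⟨(a : ℕ), h⟩ b)
        else MvPolynomial.X b ^ ((a : ℕ) - i + 1))
    {m : ℤ} (Hm : ∀ d, m ∣ (U'.det).coeff d)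
    (A : Matrix (Fin n) (Fin n) ℤ)
    (hA : ∀ (a : Fin n) (h : a.1 < i), A a = U ⟨a.1, h⟩) :
    m ∣ A.det := by
  classical
  let f : MultilinearMap ℤ (fun _ : Fin n => (Fin n → ℤ)) ℤ :=
    (Matrix.detRowAlternating : (Fin n → ℤ) [⋀^Fin n]→ₗ[ℤ] ℤ).toMultilinearMap
  let g : Fin n → Fin n → (Fin n → ℤ) := fun a b =>
    if a.1 < i then (if b = a then A a else 0) else A a b • (fun c => if c = b then 1 else 0)
  have hAg : (fun a : Fin n => A a) = fun a => ∑ b : Fin n, g a b := by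
    funext a
    by_cases h : a.1 < i
    · simp only [g, if_pos h]
      rw [Finset.sum_ite_eq' Finset.univ a (fun _ => A a)]
      simp
    · simp only [g, if_neg h]
      funext c
      rw [Finset.sum_apply]
      have hterm : ∀ b ∈ (univ : Finset (Fin n)),
          (A a b • fun c' => if c' = b then (1:ℤ) else 0) c = if c = b then A a b else 0 := by
        intro b _
        simp only [Pi.smul_apply, smul_eq_mul]
        split_ifs <;> simp
      rw [Finset.sum_congr rfl hterm, Finset.sum_ite_eq Finset.univ c (fun b => A a b)]
      simp
  have hdet : A.det = f (fun a => A a) := rfl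
  rw [hdet, hAg, f.map_sum]
  refine Finset.dvd_sum fun r _ => ?_
  by_cases hr : ∀ a : Fin n, a.1 < i → r a = a
  · have hgE : (fun a => g a (r a))
        = fun a => (if a.1 < i then (1:ℤ) else A a (r a)) • (Emat U r a : Fin n → ℤ) := by
      funext a
      by_cases h : a.1 < i
      · simp only [g, if_pos h]
        rw [if_pos (hr a h), hA a h]
        funext c
        simp [Emat, u, if_pos h, dif_pos h]
      · simp only [g, if_neg h]
        funext c
        simp [Emat, if_neg h]
    rw [hgE, f.map_smul_univ (fun a => if a.1 < i then (1:ℤ) else A a (r a)) (fun a => (Emat U r a : Fin n → ℤ))]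
    have hfE : f (fun a => (Emat U r a : Fin n → ℤ)) = (Emat U r).det := rfl
    rw [hfE, smul_eq_mul]
    have hdvdE : m ∣ (Emat U r).det := by
      by_cases hinj : Set.InjOn r {j : Fin n | ¬ j.1 < i}
      · rw [← coeff_det U U' hU' r hinj]
        exact Hm _
      · rw [Set.InjOn] at hinj
        push_neg at hinj
        obtain ⟨a, ha, c, hc, hrac, hac⟩ := hinj
        rw [Set.mem_setOf_eq] at ha hc
        rw [Matrix.det_zero_of_row_eq hac (show Emat U r a = Emat U r c by
          funext x
          simp only [Emat, Matrix.of_apply]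
          rw [if_neg (Nat.not_lt.mpr ha), if_neg (Nat.not_lt.mpr hc), hrac])]
        exact dvd_zero m
    exact hdvdE.mul_left _
  · push_neg at hr
    obtain ⟨a, ha, hra⟩ := hr
    have h0 : (fun a => g a (r a)) a = 0 := by
      simp only [g, if_pos ha]
      rw [if_neg hra]
    rw [f.map_coord_zero a h0]
    exact dvd_zero m

end

end Stmt14




/-- Let `U` be an `i × n` integer matrix whose rows form a ℤ-basis of a
direct summand of `ℤ^n` of rank `i`, and let `U'` be the `n × n` matrix over `ℤ[s₁,…,s_n]`
obtained by appending to `U` the rows `(s₁^j,…,s_n^j)` for `j = 1,…,n-i`.  Then `det U'`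
is homogeneous of degree `1 + 2 + ⋯ + (n-i)` and is not divisible by any integer greater
than `1`; in particular `det U' ≠ 0`. -/
theorem stmt14 (n i : ℕ) (hi : i ≤ n)
    (U : Matrix (Fin i) (Fin n) ℤ)
    -- the rows of `U` are a ℤ-basis of the submodule they span:
    (hli : LinearIndependent ℤ (fun a : Fin i => U a))
    -- the span of the rows of `U` is a direct summand of `ℤ^n`:
    (hsummand : ∃ C : Submodule ℤ (Fin n → ℤ),
      IsCompl (Submodule.span ℤ (Set.range fun a : Fin i => U a)) C)
    -- `U'` is obtained from `U` by appending the rows `(s₁^j,…,s_n^j)`, `j = 1,…,n-i`: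
    (U' : Matrix (Fin n) (Fin n) (MvPolynomial (Fin n) ℤ))
    (hU' : ∀ (a : Fin n) (b : Fin n),
      U' a b = if h : (a : ℕ) < i then MvPolynomial.C (U ⟨(a : ℕ), h⟩ b)
        else MvPolynomial.X b ^ ((a : ℕ) - i + 1)) :
    (U'.det).IsHomogeneous (∑ j ∈ Finset.Icc 1 (n - i), j) ∧
    (∀ m : ℤ, 1 < m → ¬ ∀ d, m ∣ (U'.det).coeff d) ∧
    U'.det ≠ 0 := by
  obtain ⟨A, hAdet, hA⟩ := Stmt14.exists_unimodular hi U hli hsummand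
  have hnd : ∀ m : ℤ, 1 < m → ¬ ∀ d, m ∣ (U'.det).coeff d := by
    intro m hm Hm
    have hdvd : m ∣ A.det := Stmt14.dvd_det_unimodular U U' hU' Hm A hA
    rcases Int.isUnit_iff.1 hAdet with h1 | h1
    · rw [h1] at hdvd
      exact absurd (Int.le_of_dvd one_pos hdvd) (by omega)
    · rw [h1, dvd_neg] at hdvd
      exact absurd (Int.le_of_dvd one_pos hdvd) (by omega)
  refine ⟨Stmt14.homog hi U U' hU', hnd, ?_⟩
  intro h0
  exact hnd 2 (by norm_num) (fun d => by rw [h0]; simp)
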